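/- In the circulant graph G_n (odd n ≥ 5) with m = ⌊(n+1)/4⌋ and u_i = v_{im}, every vertex u_j distinct from u_i, u_{i+1}, u_{i+2} is adjacent to exactly one of u_i and u_{i+2}. -/

import Mathlib

/-- The `U`-switching of a graph: toggle exactly the edges between `U` and its complement. -/
def SimpleGraph.switch {V : Type*} (G : SimpleGraph V) (U : Set V) : SimpleGraph V where
  Adj a b := a ≠ b ∧ (G.Adj a b ↔ ((a ∈ U) ↔ (b ∈ U)))
  symm := ⟨fun a b => by
    rintro ⟨h, h2⟩
    refine ⟨h.symm, ?_⟩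
    rw [G.adj_comm]; tauto⟩
  loopless := ⟨fun a => by simp⟩

/-- The complete bipartite graph with parts `U` and `Uᶜ` on vertex set `V`. -/
def completeBipartite {V : Type*} (U : Set V) : SimpleGraph V where
  Adj a b := (a ∈ U ∧ b ∉ U) ∨ (b ∈ U ∧ a ∉ U)
  symm := ⟨fun a b => by tauto⟩
  loopless := ⟨fun a => by tauto⟩

/-- `W` is isolable in `G` if `2 ≤ |W|`, `2 ≤ |Wᶜ|`, and some switching of `G`
has no edges between `W` and `Wᶜ`. -/
def SimpleGraph.Isolable {V : Type*} (G : SimpleGraph V) (W : Set V) : Prop :=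
  2 ≤ W.ncard ∧ 2 ≤ Wᶜ.ncard ∧
    ∃ U : Set V, ∀ a ∈ W, ∀ b ∈ Wᶜ, ¬ (G.switch U).Adj a b

def SimpleGraph.SwitchingSeparable {V : Type*} (G : SimpleGraph V) : Prop :=
  ∃ W : Set V, G.Isolable W

/-- The number of edges of `G` among the pairs {a,c}, {a,d}, {b,c}, {b,d}. -/
noncomputable def SimpleGraph.N {V : Type*} (G : SimpleGraph V) (a b c d : V) : ℕ := by
  classical
  exact (if G.Adj a c then 1 else 0) + (if G.Adj a d then 1 else 0) +
    (if G.Adj b c then 1 else 0) + (if G.Adj b d then 1 else 0)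

/-- The circulant graph on `ZMod n` with connection set `{±1, …, ±⌊n/4⌋}`. -/
def circulant (n : ℕ) : SimpleGraph (ZMod n) :=
  SimpleGraph.fromRel (fun a b => ∃ j : ℕ, 1 ≤ j ∧ j ≤ n / 4 ∧ b = a + (j : ZMod n))

/-- Evaluation of a multilinear polynomial over GF(2), given by its coefficient function. -/
def mleval {k : ℕ} (c : Finset (Fin k) → ZMod 2) (x : Fin k → ZMod 2) : ZMod 2 :=
  ∑ s : Finset (Fin k), c s * ∏ i ∈ s, x i

/-- The multilinear polynomial `c` has degree at most `d`. -/
def mldegLE {k : ℕ} (c : Finset (Fin k) → ZMod 2) (d : ℕ) : Prop :=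
  ∀ s : Finset (Fin k), c s ≠ 0 → s.card ≤ d

/-- The graph of a quadratic polynomial: `i ~ j` iff the monomial `x i * x j` occurs. -/
def graphOf {k : ℕ} (c : Finset (Fin k) → ZMod 2) : SimpleGraph (Fin k) where
  Adj i j := i ≠ j ∧ c {i, j} ≠ 0
  symm := ⟨fun i j => by
    rintro ⟨h, h2⟩
    exact ⟨h.symm, by rwa [Finset.pair_comm]⟩⟩
  loopless := ⟨fun i => by simp⟩

/-- The polynomial `c` represents the extended Boolean function `f`
(i.e. they agree on all tuples with an even number of ones). -/
def Represents {k : ℕ} (c : Finset (Fin k) → ZMod 2) (f : (Fin k → ZMod 2) → ZMod 2) : Prop :=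
  ∀ x : Fin k → ZMod 2, (∑ i, x i) = 0 → mleval c x = f x

/-- An extended Boolean function in `k` arguments is separable if on its domain it is the
sum of two Boolean functions depending on disjoint argument sets of at most `k - 2` variables. -/
def EbfSeparable {k : ℕ} (f : (Fin k → ZMod 2) → ZMod 2) : Prop :=
  ∃ A B : Finset (Fin k), Disjoint A B ∧ A.card ≤ k - 2 ∧ B.card ≤ k - 2 ∧
    ∃ g h : (Fin k → ZMod 2) → ZMod 2,
      (∀ x y : Fin k → ZMod 2, (∀ i ∈ A, x i = y i) → g x = g y) ∧
      (∀ x y : Fin k → ZMod 2, (∀ i ∈ B, x i = y i) → h x = h y) ∧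
      ∀ x : Fin k → ZMod 2, (∑ i, x i) = 0 → f x = g x + h x

lemma circ_adj (n : ℕ) [NeZero n] (h5 : 5 ≤ n) (a b : ZMod n) :
    (circulant n).Adj a b ↔ a ≠ b ∧ ((b - a).val ≤ n / 4 ∨ (a - b).val ≤ n / 4) := by
  have hlt : n / 4 < n := Nat.div_lt_self (by omega) (by omega)
  rw [circulant, SimpleGraph.fromRel_adj]
  constructor
  · rintro ⟨hab, (⟨j, h1, h2, rfl⟩ | ⟨j, h1, h2, rfl⟩)⟩
    · refine ⟨hab, Or.inl ?_⟩
      simp only [add_sub_cancel_left]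
      rwa [ZMod.val_cast_of_lt (by omega)]
    · refine ⟨hab, Or.inr ?_⟩
      simp only [add_sub_cancel_left]
      rwa [ZMod.val_cast_of_lt (by omega)]
  · rintro ⟨hab, h | h⟩
    · refine ⟨hab, Or.inl ⟨(b - a).val, ?_, h, ?_⟩⟩
      · have : b - a ≠ 0 := sub_ne_zero.mpr (fun h => hab h.symm)
        have := (ZMod.val_eq_zero (b - a)).not.mpr this
        omega
      · rw [ZMod.natCast_val, ZMod.cast_id]; ring
    · refine ⟨hab, Or.inr ⟨(a - b).val, ?_, h, ?_⟩⟩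
      · have : a - b ≠ 0 := sub_ne_zero.mpr hab
        have := (ZMod.val_eq_zero (a - b)).not.mpr this
        omega
      · rw [ZMod.natCast_val, ZMod.cast_id]; ring

lemma core (k m n t t2 : ℕ)
    (hcase : (n = 4*k+1 ∧ m = k) ∨ (n = 4*k+3 ∧ m = k+1))
    (hk : 1 ≤ k) (ht : t < n) (ht0 : t ≠ 0) (ht1 : t ≠ m) (ht2 : t ≠ 2*m)
    (h2 : (t + (2*k+1) < n ∧ t2 = t + (2*k+1)) ∨ (n ≤ t + (2*k+1) ∧ t2 = t + (2*k+1) - n)) :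
    Xor' (t ≤ k ∨ n - t ≤ k) (t2 ≤ k ∨ n - t2 ≤ k) := by
  unfold Xor' Xor
  omega

theorem circulant_adjacent_exactly_one (n : ℕ) (hodd : Odd n) (h5 : 5 ≤ n) (i j : ZMod n)
    (h0 : j ≠ i) (h1 : j ≠ i + 1) (h2 : j ≠ i + 2) :
    Xor' ((circulant n).Adj (j * (((n + 1) / 4 : ℕ) : ZMod n))
            (i * (((n + 1) / 4 : ℕ) : ZMod n)))
         ((circulant n).Adj (j * (((n + 1) / 4 : ℕ) : ZMod n))
            ((i + 2) * (((n + 1) / 4 : ℕ) : ZMod n))) := by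
  haveI : NeZero n := ⟨by omega⟩
  obtain ⟨c, hc⟩ := hodd
  set m : ℕ := (n + 1) / 4 with hm
  set k : ℕ := n / 4 with hkdef
  set M : ZMod n := (m : ZMod n) with hM
  have hk : 1 ≤ k := by omega
  have hcase : (n = 4*k+1 ∧ m = k) ∨ (n = 4*k+3 ∧ m = k+1) := by omega
  have hmn : m < n := by omega
  have h2mn : 2*m < n := by omega
  have h2k1 : 2*k+1 < n := by omega
  -- M is cancellable
  have hM4 : M * 4 = 1 ∨ M * 4 = -1 := by
    have hcast : M * 4 = ((m * 4 : ℕ) : ZMod n) := by rw [hM]; push_cast; ring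
    rcases hcase with ⟨hn, hmk⟩ | ⟨hn, hmk⟩
    · right
      rw [hcast, show m * 4 = n - 1 by omega, Nat.cast_sub (by omega), ZMod.natCast_self,
        Nat.cast_one]
      ring
    · left
      rw [hcast, show m * 4 = n + 1 by omega]
      push_cast [ZMod.natCast_self]
      ring
  have hcancel : ∀ a b : ZMod n, a * M = b * M → a = b := by
    intro a b hab
    have h4 : a * (M * 4) = b * (M * 4) := by rw [← mul_assoc, ← mul_assoc, hab]
    rcases hM4 with h1 | h1 <;> rw [h1] at h4
    · simpa using h4
    · have : -a = -b := by simpa [mul_neg] using h4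
      exact neg_inj.mp this
  set x : ZMod n := j * M - i * M with hx
  have hx0 : x ≠ 0 := by
    intro h
    exact h0 (hcancel j i (sub_eq_zero.mp h))
  have hx1 : x ≠ M := by
    intro h
    refine h1 (hcancel j (i + 1) ?_)
    linear_combination h
  have hx2 : x ≠ 2 * M := by
    intro h
    refine h2 (hcancel j (i + 2) ?_)
    linear_combination h
  have hA1 : j * M ≠ i * M := fun h => h0 (hcancel j i h)
  have hA2 : j * M ≠ (i + 2) * M := fun h => h2 (hcancel j (i + 2) h)
  set t : ℕ := x.val with ht
  have htn : t < n := ZMod.val_lt x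
  have ht0 : t ≠ 0 := by
    rw [ht, Ne, ZMod.val_eq_zero]
    exact hx0
  have hxcast : ((t : ℕ) : ZMod n) = x := by rw [ht, ZMod.natCast_val, ZMod.cast_id]
  have ht1 : t ≠ m := by
    intro h
    apply hx1
    rw [← hxcast, h, hM]
  have ht2' : t ≠ 2 * m := by
    intro h
    apply hx2
    rw [← hxcast, h, hM]
    push_cast
    ring
  -- x - 2M = x + (2k+1)
  have hsum : ((2*m : ℕ) : ZMod n) + ((2*k+1 : ℕ) : ZMod n) = 0 := by
    rw [← Nat.cast_add, show 2*m + (2*k+1) = n by omega, ZMod.natCast_self]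
  have hsub : x - 2 * M = x + ((2*k+1 : ℕ) : ZMod n) := by
    have h2M : 2 * M = ((2*m : ℕ) : ZMod n) := by rw [hM]; push_cast; ring
    rw [h2M]
    linear_combination -hsum
  set t2 : ℕ := (x - 2 * M).val with ht2def
  have ht2n : t2 < n := ZMod.val_lt _
  have ht2eq : t2 = (t + (2*k+1)) % n := by
    rw [ht2def, hsub, ZMod.val_add, ZMod.val_cast_of_lt h2k1]
  have hdisj : (t + (2*k+1) < n ∧ t2 = t + (2*k+1)) ∨
      (n ≤ t + (2*k+1) ∧ t2 = t + (2*k+1) - n) := by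
    rcases Nat.lt_or_ge (t + (2*k+1)) n with h | h
    · exact Or.inl ⟨h, by rw [ht2eq, Nat.mod_eq_of_lt h]⟩
    · exact Or.inr ⟨h, by rw [ht2eq, Nat.mod_eq_sub_mod h, Nat.mod_eq_of_lt (by omega)]⟩
  have key := core k m n t t2 hcase hk htn ht0 ht1 ht2' hdisj
  rw [circ_adj n h5, circ_adj n h5, ← hkdef]
  have e1 : i * M - j * M = -x := by rw [hx]; ring
  have e2 : (i + 2) * M - j * M = -(x - 2 * M) := by rw [hx]; ring
  have e3 : j * M - (i + 2) * M = x - 2 * M := by rw [hx]; ring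
  rw [e1, e2, e3]
  have hne2M : x - 2 * M ≠ 0 := sub_ne_zero.mpr hx2
  have v2 : (-x).val = n - t := by
    haveI : NeZero x := ⟨hx0⟩
    rw [ht]; exact ZMod.val_neg_of_ne_zero x
  have v4 : (-(x - 2 * M)).val = n - t2 := by
    haveI : NeZero (x - 2 * M) := ⟨hne2M⟩
    rw [ht2def]; exact ZMod.val_neg_of_ne_zero _
  rw [v2, v4, ← hx, ← ht, ← ht2def]
  unfold Xor' at key ⊢
  rcases key with ⟨p, q⟩ | ⟨p, q⟩
  · exact Or.inl ⟨⟨hA1, p.symm⟩, fun h => q h.2.symm⟩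
  · exact Or.inr ⟨⟨hA2, p.symm⟩, fun h => q h.2.symm⟩
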